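/- In any feasible solution to the IP (Det) with at most one facility chosen per origin in w, for every origin v and facility k in N(v): w_{vk} = 1 if and only if k is the closest operating facility to v in N(v). -/

import Mathlib

open Finset

/-- In any feasible solution to (Det) with at most one targeted
facility per origin, `w v k = 1` iff `k` is the closest operating facility to
`v` in `N v`.  Here `rank v` encodes the distance ordering `π_v` of `N v`
(injective on `N v`), and a facility is operating if it is a practice or a set
up site. -/
theorem stmt_16 {V L P : Type*} [Fintype V] [DecidableEq L] [DecidableEq P]
    (N : V → Finset (L ⊕ P)) (rank : V → L ⊕ P → ℕ)
    (hrank : ∀ v, ∀ k ∈ N v, ∀ k' ∈ N v, rank v k = rank v k' → k = k')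
    (y : L → ℕ) (w : V → L ⊕ P → ℕ)
    (hy : ∀ l, y l ≤ 1) (hw : ∀ v k, w v k ≤ 1)
    (hcover : ∀ v, 1 ≤ ∑ k ∈ N v, w v k)
    (hone : ∀ v, ∑ k ∈ N v, w v k ≤ 1)
    (hwy : ∀ v l, Sum.inl l ∈ N v → w v (Sum.inl l) ≤ y l)
    (hclosel : ∀ v l, Sum.inl l ∈ N v →
      y l ≤ w v (Sum.inl l) +
        ∑ k ∈ (N v).filter (fun k => rank v k < rank v (Sum.inl l)), w v k)
    (hclosep : ∀ v p, Sum.inr p ∈ N v →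
      1 ≤ w v (Sum.inr p) +
        ∑ k ∈ (N v).filter (fun k => rank v k < rank v (Sum.inr p)), w v k)
    (hop : ∀ v, ∃ k ∈ N v, Sum.elim (fun l => y l = 1) (fun _ => True) k) :
    ∀ v, ∀ k ∈ N v,
      (w v k = 1 ↔
        (Sum.elim (fun l => y l = 1) (fun _ => True) k ∧
          ∀ k' ∈ N v, Sum.elim (fun l => y l = 1) (fun _ => True) k' →
            rank v k ≤ rank v k')) := by
  intro v k hk
  have hsum : ∑ k ∈ N v, w v k = 1 := le_antisymm (hone v) (hcover v)
  obtain ⟨k₀, hk₀, hwk₀⟩ : ∃ k₀ ∈ N v, w v k₀ = 1 := by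
    by_contra h
    push_neg at h
    have hz : ∑ k ∈ N v, w v k = 0 := Finset.sum_eq_zero fun x hx => by
      have h1 := hw v x; have h2 := h x hx; omega
    omega
  have hzero : ∀ k' ∈ N v, k' ≠ k₀ → w v k' = 0 := by
    intro k' hk' hne
    have hsub : ({k₀, k'} : Finset (L ⊕ P)) ⊆ N v := by
      intro x hx; simp at hx; rcases hx with rfl | rfl <;> assumption
    have h2 := Finset.sum_le_sum_of_subset (f := w v) hsub
    rw [Finset.sum_pair (Ne.symm hne)] at h2
    omega
  have hopk₀ : Sum.elim (fun l => y l = 1) (fun _ => True) k₀ := by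
    cases k₀ with
    | inl l => have h1 := hwy v l hk₀; have h2 := hy l; simp; omega
    | inr p => trivial
  have hmin : ∀ k' ∈ N v, Sum.elim (fun l => y l = 1) (fun _ => True) k' →
      rank v k₀ ≤ rank v k' := by
    intro k' hk' hop'
    by_contra hlt
    push_neg at hlt
    have hfzero : ∑ x ∈ (N v).filter (fun x => rank v x < rank v k'), w v x = 0 := by
      apply Finset.sum_eq_zero
      intro x hx
      rw [Finset.mem_filter] at hx
      apply hzero x hx.1
      intro hxe
      subst hxe
      omega
    have hne : k' ≠ k₀ := by intro h; subst h; omega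
    have hw' : w v k' = 0 := hzero k' hk' hne
    cases k' with
    | inl l => have := hclosel v l hk'; simp at hop'; omega
    | inr p => have := hclosep v p hk'; omega
  constructor
  · intro hwk
    have hkk : k = k₀ := by
      by_contra hne
      have := hzero k hk hne
      omega
    subst hkk
    exact ⟨hopk₀, hmin⟩
  · rintro ⟨hopk, hminx⟩
    have h1 := hmin k hk hopk
    have h2 := hminx k₀ hk₀ hopk₀
    have hkk : k = k₀ := hrank v k hk k₀ hk₀ (by omega)
    rw [hkk]; exact hwk₀
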